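/- arXiv:1706.02620 — 4 statements merged into one kernel-verified Lean document; each statement's English description precedes it below -/
import Mathlib

section
/- Let 1 < p, s < ∞ and let w be a weight. Then w ∈ A_p ∩ RH_s if and only if w^s ∈ A_q, where q = s(p − 1) + 1. Moreover, in the forward direction [w^s]_{A_q} ≤ [w]_{RH_s}^s [w]_{A_p}^s. -/
open MeasureTheory ENNReal
open scoped Classical

noncomputable section

variable {n : ℕ}

/-- An axis-parallel half-open cube in `ℝⁿ`. -/
def IsCube (Q : Set (Fin n → ℝ)) : Prop :=
  ∃ (a : Fin n → ℝ) (l : ℝ), 0 < l ∧ Q = {x | ∀ i, a i ≤ x i ∧ x i < a i + l}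

/-- The average `⨍_Q f` of an `ℝ≥0∞`-valued function over a set, w.r.t. Lebesgue measure. -/
def eavg (Q : Set (Fin n → ℝ)) (f : (Fin n → ℝ) → ℝ≥0∞) : ℝ≥0∞ :=
  (∫⁻ x in Q, f x) / volume Q

/-- A weight: measurable, a.e. positive and finite, and locally integrable. -/
def IsWeight (w : (Fin n → ℝ) → ℝ≥0∞) : Prop :=
  Measurable w ∧ (∀ᵐ x ∂(volume : Measure (Fin n → ℝ)), 0 < w x ∧ w x < ∞) ∧
    ∀ Q : Set (Fin n → ℝ), IsCube Q → ∫⁻ x in Q, w x < ∞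

/-- The Muckenhoupt `A_p` constant, `1 ≤ p < ∞` (ess-sup form when `p = 1`). -/
def ApConst (p : ℝ) (w : (Fin n → ℝ) → ℝ≥0∞) : ℝ≥0∞ :=
  if p = 1 then
    ⨆ (Q : Set (Fin n → ℝ)) (_ : IsCube Q),
      essSup (fun x => eavg Q w / w x) (volume.restrict Q)
  else
    ⨆ (Q : Set (Fin n → ℝ)) (_ : IsCube Q),
      eavg Q w * (eavg Q fun x => w x ^ (1 - p / (p - 1))) ^ (p - 1)

/-- Membership in the Muckenhoupt class `A_p`. -/
def MemAp (p : ℝ) (w : (Fin n → ℝ) → ℝ≥0∞) : Prop := ApConst p w < ∞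

/-- The reverse Hölder `RH_s` constant. -/
def RHConst (s : ℝ) (w : (Fin n → ℝ) → ℝ≥0∞) : ℝ≥0∞ :=
  ⨆ (Q : Set (Fin n → ℝ)) (_ : IsCube Q),
    (eavg Q fun x => w x ^ s) ^ (1 / s) / eavg Q w

/-- Membership in the reverse Hölder class `RH_s`. -/
def MemRH (s : ℝ) (w : (Fin n → ℝ) → ℝ≥0∞) : Prop := RHConst s w < ∞

/-- The `RH_∞` constant. -/
def RHInfConst (w : (Fin n → ℝ) → ℝ≥0∞) : ℝ≥0∞ :=
  ⨆ (Q : Set (Fin n → ℝ)) (_ : IsCube Q),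
    essSup (fun x => w x / eavg Q w) (volume.restrict Q)

/-- Membership in `RH_∞`. -/
def MemRHInf (w : (Fin n → ℝ) → ℝ≥0∞) : Prop := RHInfConst w < ∞

/-- The Hardy–Littlewood maximal operator (over all cubes containing `x`). -/
def maximal (f : (Fin n → ℝ) → ℝ) (x : Fin n → ℝ) : ℝ≥0∞ :=
  ⨆ (Q : Set (Fin n → ℝ)) (_ : IsCube Q) (_ : x ∈ Q),
    eavg Q fun y => ENNReal.ofReal |f y|

/-- The Hardy–Littlewood maximal operator acting on `ℝ≥0∞`-valued functions. -/
def emaximal (f : (Fin n → ℝ) → ℝ≥0∞) (x : Fin n → ℝ) : ℝ≥0∞ :=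
  ⨆ (Q : Set (Fin n → ℝ)) (_ : IsCube Q) (_ : x ∈ Q), eavg Q f

/-- The norm `‖f‖_{L^p(w)} = (∫ f^p w dx)^(1/p)`. -/
def wLpNorm (p : ℝ) (w f : (Fin n → ℝ) → ℝ≥0∞) : ℝ≥0∞ :=
  (∫⁻ x, f x ^ p * w x) ^ (1 / p)

namespace Stmt6Aux

lemma isCube_facts {Q : Set (Fin n → ℝ)} (hQ : IsCube Q) :
    MeasurableSet Q ∧ 0 < volume Q ∧ volume Q < ∞ := by
  obtain ⟨a, l, hl, rfl⟩ := hQ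
  have hset : {x : Fin n → ℝ | ∀ i, a i ≤ x i ∧ x i < a i + l}
      = Set.pi Set.univ fun i => Set.Ico (a i) (a i + l) := by
    ext x; simp [Set.mem_pi]
  rw [hset]
  have hvol : volume (Set.pi Set.univ fun i => Set.Ico (a i) (a i + l))
      = ENNReal.ofReal l ^ n := by
    rw [volume_pi_pi]
    simp [Real.volume_Ico]
  refine ⟨MeasurableSet.univ_pi fun i => measurableSet_Ico, ?_, ?_⟩
  · rw [hvol]; exact ENNReal.pow_pos (ENNReal.ofReal_pos.mpr hl) n
  · rw [hvol]; exact ENNReal.pow_lt_top ENNReal.ofReal_lt_top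

lemma setLIntegral_pos {f : (Fin n → ℝ) → ℝ≥0∞} (hf : Measurable f)
    (hpos : ∀ᵐ x ∂(volume : Measure (Fin n → ℝ)), 0 < f x)
    {Q : Set (Fin n → ℝ)} (hQ0 : 0 < volume Q) :
    0 < ∫⁻ x in Q, f x := by
  rw [pos_iff_ne_zero]
  intro h
  rw [lintegral_eq_zero_iff hf] at h
  have hfalse : ∀ᵐ x ∂(volume.restrict Q), False :=
    (h.and (ae_restrict_of_ae hpos)).mono fun x hx => absurd hx.2 (by simp [hx.1])
  have h0 := ae_iff.mp hfalse
  simp [Measure.restrict_apply_univ] at h0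
  exact hQ0.ne' h0

lemma eavg_pos {f : (Fin n → ℝ) → ℝ≥0∞} (hf : Measurable f)
    (hpos : ∀ᵐ x ∂(volume : Measure (Fin n → ℝ)), 0 < f x)
    {Q : Set (Fin n → ℝ)} (hQ0 : 0 < volume Q) (hQt : volume Q < ∞) :
    0 < eavg Q f :=
  ENNReal.div_pos (setLIntegral_pos hf hpos hQ0).ne' hQt.ne

lemma eavg_lt_top {f : (Fin n → ℝ) → ℝ≥0∞} {Q : Set (Fin n → ℝ)}
    (hQ0 : 0 < volume Q) (hint : ∫⁻ x in Q, f x < ∞) :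
    eavg Q f < ∞ :=
  ENNReal.div_lt_top hint.ne hQ0.ne'

lemma eavg_holder {Q : Set (Fin n → ℝ)} (hQ : IsCube Q) {f g : (Fin n → ℝ) → ℝ≥0∞}
    (hf : Measurable f) (hg : Measurable g) {a b : ℝ} (hab : a.HolderConjugate b) :
    eavg Q (fun x => f x * g x)
      ≤ (eavg Q fun x => f x ^ a) ^ (1 / a) * (eavg Q fun x => g x ^ b) ^ (1 / b) := by
  have key : ∀ h : (Fin n → ℝ) → ℝ≥0∞,
      eavg Q h = ∫⁻ x, h x ∂((volume Q)⁻¹ • volume.restrict Q) := by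
    intro h
    rw [lintegral_smul_measure, eavg, ENNReal.div_eq_inv_mul, smul_eq_mul]
  rw [key, key, key]
  exact ENNReal.lintegral_mul_le_Lp_mul_Lq _ hab hf.aemeasurable hg.aemeasurable

lemma eavg_one {Q : Set (Fin n → ℝ)} (h0 : 0 < volume Q) (ht : volume Q < ∞) :
    eavg Q (fun _ => (1 : ℝ≥0∞)) = 1 := by
  simp [eavg, ENNReal.div_self h0.ne' ht.ne]

lemma eavg_le_rpow {s : ℝ} (hs : 1 < s) {Q : Set (Fin n → ℝ)} (hQ : IsCube Q)
    {f : (Fin n → ℝ) → ℝ≥0∞} (hf : Measurable f) :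
    eavg Q f ≤ (eavg Q fun x => f x ^ s) ^ (1 / s) := by
  obtain ⟨hm, h0, ht⟩ := isCube_facts hQ
  have h2 : s - 1 ≠ 0 := sub_ne_zero.mpr hs.ne'
  have hcs : s.HolderConjugate (s / (s - 1)) := (Real.holderConjugate_iff_eq_conjExponent hs).mpr rfl
  have H := eavg_holder hQ hf measurable_const (g := fun _ => (1 : ℝ≥0∞)) hcs
  simpa [eavg_one h0 ht, ENNReal.one_rpow] using H

end Stmt6Aux

namespace Stmt6Aux

lemma one_le_ap_term {p : ℝ} (hp : 1 < p) {w : (Fin n → ℝ) → ℝ≥0∞} (hw : IsWeight w)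
    {Q : Set (Fin n → ℝ)} (hQ : IsCube Q) :
    1 ≤ eavg Q w * (eavg Q fun x => w x ^ (1 - p / (p - 1))) ^ (p - 1) := by
  obtain ⟨hm, h0, ht⟩ := isCube_facts hQ
  set c := p / (p - 1) with hc
  have hp1 : p - 1 ≠ 0 := sub_ne_zero.mpr hp.ne'
  have hp0 : (0 : ℝ) < p := lt_trans one_pos hp
  have hcs : p.HolderConjugate c := (Real.holderConjugate_iff_eq_conjExponent hp).mpr hc
  have hc0 : c ≠ 0 := hcs.symm.pos.ne'
  have hmul : ∀ᵐ x ∂(volume : Measure (Fin n → ℝ)),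
      w x ^ (1 / p) * w x ^ ((1 - c) / c) = 1 := by
    filter_upwards [hw.2.1] with x hx
    rw [← ENNReal.rpow_add _ _ hx.1.ne' hx.2.ne]
    have he : 1 / p + (1 - c) / c = 0 := by rw [hc]; field_simp; ring
    rw [he, ENNReal.rpow_zero]
  have heq : eavg Q (fun x => w x ^ (1 / p) * w x ^ ((1 - c) / c)) = 1 := by
    have h1 : (∫⁻ x in Q, w x ^ (1 / p) * w x ^ ((1 - c) / c)) = ∫⁻ _ in Q, 1 :=
      lintegral_congr_ae (ae_restrict_of_ae hmul)
    rw [eavg, h1, setLIntegral_one, ENNReal.div_self h0.ne' ht.ne]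
  have hH := eavg_holder hQ (hw.1.pow_const (1 / p)) (hw.1.pow_const ((1 - c) / c)) hcs
  rw [heq] at hH
  have e1 : (fun x => (w x ^ (1 / p)) ^ p) = w := by
    funext x
    rw [← ENNReal.rpow_mul, one_div, inv_mul_cancel₀ hp0.ne', ENNReal.rpow_one]
  have e2 : (fun x => (w x ^ ((1 - c) / c)) ^ c) = fun x => w x ^ (1 - p / (p - 1)) := by
    funext x
    rw [← ENNReal.rpow_mul, div_mul_cancel₀ _ hc0]
  rw [e1, e2] at hH
  have hfin := ENNReal.rpow_le_rpow hH hp0.le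
  rw [ENNReal.one_rpow, ENNReal.mul_rpow_of_nonneg _ _ hp0.le, ← ENNReal.rpow_mul,
    ← ENNReal.rpow_mul] at hfin
  have ea : 1 / p * p = 1 := by field_simp
  have eb : 1 / c * p = p - 1 := by rw [hc]; field_simp
  rw [ea, eb, ENNReal.rpow_one] at hfin
  exact hfin

end Stmt6Aux

/-- For `1 < p, s < ∞`, `w ∈ A_p ∩ RH_s` iff `w^s ∈ A_q` with
`q = s(p-1)+1`; moreover in the forward direction `[w^s]_{A_q} ≤ [w]_{RH_s}^s [w]_{A_p}^s`. -/
theorem statement6 (n : ℕ) (p s : ℝ) (hp : 1 < p) (hs : 1 < s)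
    (w : (Fin n → ℝ) → ℝ≥0∞) (hw : IsWeight w) :
    ((MemAp p w ∧ MemRH s w) ↔ MemAp (s * (p - 1) + 1) (fun x => w x ^ s)) ∧
    (MemAp p w → MemRH s w →
      ApConst (s * (p - 1) + 1) (fun x => w x ^ s) ≤ RHConst s w ^ s * ApConst p w ^ s) := by
  open Stmt6Aux in
  set q := s * (p - 1) + 1 with hqdef
  have hs0 : (0 : ℝ) < s := lt_trans one_pos hs
  have hp1 : (0 : ℝ) < p - 1 := sub_pos.mpr hp
  have hqm : q - 1 = s * (p - 1) := by rw [hqdef]; ring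
  have hq1pos : (0 : ℝ) < q - 1 := by rw [hqm]; positivity
  have hq1 : q ≠ 1 := by intro h; rw [h] at hq1pos; simp at hq1pos
  have hpne1 : p ≠ 1 := hp.ne'
  have wmeas := hw.1
  have wpos : ∀ᵐ x ∂(volume : Measure (Fin n → ℝ)), 0 < w x :=
    hw.2.1.mono fun x h => h.1
  have hexp : ∀ x : Fin n → ℝ,
      (w x ^ s) ^ (1 - q / (q - 1)) = w x ^ (1 - p / (p - 1)) := by
    intro x
    rw [← ENNReal.rpow_mul]
    congr 1
    rw [hqdef]
    field_simp
    ring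
  -- per-cube exponent identity
  have hmid : ∀ {Q : Set (Fin n → ℝ)},
      (eavg Q fun x => w x ^ s) ^ (1 / s) *
        (eavg Q fun x => w x ^ (1 - p / (p - 1))) ^ (p - 1)
      = ((eavg Q fun x => w x ^ s) *
          (eavg Q fun x => w x ^ (1 - p / (p - 1))) ^ (q - 1)) ^ (1 / s) := by
    intro Q
    rw [ENNReal.mul_rpow_of_nonneg _ _ (by positivity : (0:ℝ) ≤ 1 / s),
      ← ENNReal.rpow_mul, hqm]
    congr 2
    field_simp
  have fwd : MemRH s w →
      ApConst q (fun x => w x ^ s) ≤ RHConst s w ^ s * ApConst p w ^ s := by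
    intro _
    rw [ApConst, if_neg hq1]
    refine iSup₂_le fun Q hQ => ?_
    obtain ⟨hm, h0, ht⟩ := isCube_facts hQ
    simp only [hexp]
    set A := eavg Q w with hA
    set B := eavg Q fun x => w x ^ (1 - p / (p - 1)) with hB
    set S := eavg Q fun x => w x ^ s with hS
    have hA0 : 0 < A := eavg_pos wmeas wpos h0 ht
    have hAt : A < ∞ := eavg_lt_top h0 (hw.2.2 Q hQ)
    have hRQ : S ^ (1 / s) / A ≤ RHConst s w :=
      le_iSup₂ (f := fun Q (_ : IsCube Q) =>
        (eavg Q fun x => w x ^ s) ^ (1 / s) / eavg Q w) Q hQ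
    have hApQ : A * B ^ (p - 1) ≤ ApConst p w := by
      rw [ApConst, if_neg hpne1]
      exact le_iSup₂ (f := fun Q (_ : IsCube Q) =>
        eavg Q w * (eavg Q fun x => w x ^ (1 - p / (p - 1))) ^ (p - 1)) Q hQ
    have h2 : S ^ (1 / s) ≤ RHConst s w * A := by
      rwa [ENNReal.div_le_iff_le_mul (Or.inl hA0.ne') (Or.inl hAt.ne)] at hRQ
    have h1 : S ≤ RHConst s w ^ s * A ^ s := by
      calc S = (S ^ (1 / s)) ^ s := by
              rw [← ENNReal.rpow_mul, one_div, inv_mul_cancel₀ hs0.ne', ENNReal.rpow_one]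
        _ ≤ (RHConst s w * A) ^ s := ENNReal.rpow_le_rpow h2 hs0.le
        _ = RHConst s w ^ s * A ^ s := ENNReal.mul_rpow_of_nonneg _ _ hs0.le
    calc S * B ^ (q - 1) ≤ RHConst s w ^ s * A ^ s * B ^ (q - 1) :=
          mul_le_mul_left h1 _
      _ = RHConst s w ^ s * (A * B ^ (p - 1)) ^ s := by
          rw [ENNReal.mul_rpow_of_nonneg A _ hs0.le, ← ENNReal.rpow_mul, hqm,
            mul_comm (p - 1) s, mul_assoc]
      _ ≤ RHConst s w ^ s * ApConst p w ^ s :=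
          mul_le_mul_right (ENNReal.rpow_le_rpow hApQ hs0.le) _
  -- reverse direction bounds
  have bAp : ApConst p w ≤ (ApConst q (fun x => w x ^ s)) ^ (1 / s) := by
    conv_lhs => rw [ApConst, if_neg hpne1]
    refine iSup₂_le fun Q hQ => ?_
    obtain ⟨hm, h0, ht⟩ := isCube_facts hQ
    have key4 := eavg_le_rpow hs hQ wmeas
    have hAqQ : (eavg Q fun x => w x ^ s) *
        (eavg Q fun x => w x ^ (1 - p / (p - 1))) ^ (q - 1)
        ≤ ApConst q (fun x => w x ^ s) := by
      rw [ApConst, if_neg hq1]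
      have := le_iSup₂ (f := fun Q (_ : IsCube Q) =>
        (eavg Q fun x => w x ^ s) *
          (eavg Q fun x => (w x ^ s) ^ (1 - q / (q - 1))) ^ (q - 1)) Q hQ
      simpa only [hexp] using this
    calc eavg Q w * (eavg Q fun x => w x ^ (1 - p / (p - 1))) ^ (p - 1)
        ≤ (eavg Q fun x => w x ^ s) ^ (1 / s) *
            (eavg Q fun x => w x ^ (1 - p / (p - 1))) ^ (p - 1) :=
          mul_le_mul_left key4 _
      _ = ((eavg Q fun x => w x ^ s) *
            (eavg Q fun x => w x ^ (1 - p / (p - 1))) ^ (q - 1)) ^ (1 / s) := hmid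
      _ ≤ (ApConst q (fun x => w x ^ s)) ^ (1 / s) :=
          ENNReal.rpow_le_rpow hAqQ (by positivity)
  have bRH : RHConst s w ≤ (ApConst q (fun x => w x ^ s)) ^ (1 / s) := by
    rw [RHConst]
    refine iSup₂_le fun Q hQ => ?_
    obtain ⟨hm, h0, ht⟩ := isCube_facts hQ
    have hA0 : 0 < eavg Q w := eavg_pos wmeas wpos h0 ht
    have hAt : eavg Q w < ∞ := eavg_lt_top h0 (hw.2.2 Q hQ)
    have key3 := one_le_ap_term hp hw hQ
    have hAqQ : (eavg Q fun x => w x ^ s) *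
        (eavg Q fun x => w x ^ (1 - p / (p - 1))) ^ (q - 1)
        ≤ ApConst q (fun x => w x ^ s) := by
      rw [ApConst, if_neg hq1]
      have := le_iSup₂ (f := fun Q (_ : IsCube Q) =>
        (eavg Q fun x => w x ^ s) *
          (eavg Q fun x => (w x ^ s) ^ (1 - q / (q - 1))) ^ (q - 1)) Q hQ
      simpa only [hexp] using this
    rw [ENNReal.div_le_iff_le_mul (Or.inl hA0.ne') (Or.inl hAt.ne)]
    calc (eavg Q fun x => w x ^ s) ^ (1 / s)
        = 1 * (eavg Q fun x => w x ^ s) ^ (1 / s) := (one_mul _).symm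
      _ ≤ (eavg Q w * (eavg Q fun x => w x ^ (1 - p / (p - 1))) ^ (p - 1)) *
            (eavg Q fun x => w x ^ s) ^ (1 / s) := mul_le_mul_left key3 _
      _ = ((eavg Q fun x => w x ^ s) ^ (1 / s) *
            (eavg Q fun x => w x ^ (1 - p / (p - 1))) ^ (p - 1)) * eavg Q w := by ring
      _ = ((eavg Q fun x => w x ^ s) *
            (eavg Q fun x => w x ^ (1 - p / (p - 1))) ^ (q - 1)) ^ (1 / s) * eavg Q w := by
          rw [hmid]
      _ ≤ (ApConst q (fun x => w x ^ s)) ^ (1 / s) * eavg Q w :=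
          mul_le_mul_left (ENNReal.rpow_le_rpow hAqQ (by positivity)) _
  refine ⟨⟨fun h => ?_, fun hAq => ⟨?_, ?_⟩⟩, fun hAp hRH => fwd hRH⟩
  · obtain ⟨hAp, hRH⟩ := h
    have hAp' : ApConst p w < ∞ := hAp
    have hRH' : RHConst s w < ∞ := hRH
    exact lt_of_le_of_lt (fwd hRH)
      (ENNReal.mul_lt_top (ENNReal.rpow_lt_top_of_nonneg hs0.le hRH'.ne)
        (ENNReal.rpow_lt_top_of_nonneg hs0.le hAp'.ne))
  · have hAq' : ApConst q (fun x => w x ^ s) < ∞ := hAq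
    exact lt_of_le_of_lt bAp
      (ENNReal.rpow_lt_top_of_nonneg (by positivity) hAq'.ne)
  · have hAq' : ApConst q (fun x => w x ^ s) < ∞ := hAq
    exact lt_of_le_of_lt bRH
      (ENNReal.rpow_lt_top_of_nonneg (by positivity) hAq'.ne)
end
end

section
/- Let 1 < s < ∞ and let w₁, w₂ ∈ A_∞ be weights with w₁ ∈ RH_s and w₂ ∈ RH_{s'}, where s' = s/(s−1). Then there exists a constant C > 0 such that for every cube Q, (⨍_Q w₁^s dx)^{1/s} (⨍_Q w₂^{s'} dx)^{1/s'} ≤ C ⨍_Q w₁ w₂ dx. -/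
open MeasureTheory ENNReal
open scoped Classical

noncomputable section

variable {n : ℕ}

-- ===== auxiliary lemmas =====

lemma IsCube.aux {Q : Set (Fin n → ℝ)} (hQ : IsCube Q) :
    MeasurableSet Q ∧ 0 < volume Q ∧ volume Q < ∞ := by
  obtain ⟨a, l, hl, rfl⟩ := hQ
  have hQ' : {x : Fin n → ℝ | ∀ i, a i ≤ x i ∧ x i < a i + l}
      = Set.pi Set.univ (fun i => Set.Ico (a i) (a i + l)) := by
    ext x; simp [Set.mem_pi, Set.mem_Ico]
  rw [hQ']
  refine ⟨MeasurableSet.univ_pi (fun i => measurableSet_Ico), ?_, ?_⟩ <;>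
    rw [volume_pi_pi] <;> simp only [Real.volume_Ico, add_sub_cancel_left,
      Finset.prod_const, Finset.card_univ, Fintype.card_fin]
  · exact ENNReal.pow_pos (ENNReal.ofReal_pos.mpr hl) n
  · exact ENNReal.pow_lt_top ofReal_lt_top

/-- Positivity of the average of an a.e. positive function. -/
lemma eavg_pos {Q : Set (Fin n → ℝ)} (hQ : IsCube Q) {w : (Fin n → ℝ) → ℝ≥0∞}
    (hm : Measurable w) (hpos : ∀ᵐ x ∂(volume : Measure (Fin n → ℝ)), 0 < w x) :
    0 < eavg Q w := by
  obtain ⟨-, hv0, hvt⟩ := hQ.aux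
  refine ENNReal.div_pos (fun h0 => ?_) hvt.ne
  have hz := (lintegral_eq_zero_iff hm).mp h0
  have hfalse : ∀ᵐ x ∂(volume.restrict Q), False := by
    filter_upwards [hz, ae_restrict_of_ae hpos] with x h1 h2
    exact h2.ne' h1
  have : volume Q = 0 := by
    simpa [Measure.restrict_apply_univ] using (ae_iff.mp hfalse)
  exact hv0.ne' this

lemma eavg_lt_top {Q : Set (Fin n → ℝ)} (hQ : IsCube Q) {w : (Fin n → ℝ) → ℝ≥0∞}
    (hint : ∫⁻ x in Q, w x < ∞) : eavg Q w < ∞ :=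
  ENNReal.div_lt_top hint.ne hQ.aux.2.1.ne'

/-- The per-cube `A_p`-type bound with a uniform exponent and constant. -/
lemma ap_bound {w : (Fin n → ℝ) → ℝ≥0∞} (hw : IsWeight w)
    (hA : ∃ p : ℝ, 1 ≤ p ∧ MemAp p w) :
    ∃ (ε : ℝ) (B : ℝ≥0∞), 0 < ε ∧ B < ∞ ∧ ∀ Q : Set (Fin n → ℝ), IsCube Q →
      eavg Q w * (eavg Q fun x => w x ^ (-ε)) ^ (1/ε) ≤ B := by
  obtain ⟨hm, hpos, hint⟩ := hw
  obtain ⟨p, hp, hAp⟩ := hA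
  rcases eq_or_lt_of_le hp with rfl | hp1
  · -- p = 1
    refine ⟨1, ApConst 1 w, one_pos, hAp, fun Q hQ => ?_⟩
    have hA0 : 0 < eavg Q w := eavg_pos hQ hm (hpos.mono fun x h => h.1)
    have hAt : eavg Q w < ∞ := eavg_lt_top hQ (hint Q hQ)
    have hess : essSup (fun x => eavg Q w / w x) (volume.restrict Q) ≤ ApConst 1 w := by
      rw [ApConst, if_pos rfl]
      exact le_iSup₂ (f := fun (Q : Set (Fin n → ℝ)) (_ : IsCube Q) =>
        essSup (fun x => eavg Q w / w x) (volume.restrict Q)) Q hQ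
    have hae : ∀ᵐ x ∂(volume.restrict Q), w x ^ (-(1:ℝ)) ≤ (eavg Q w)⁻¹ * ApConst 1 w := by
      filter_upwards [_root_.ae_le_essSup (f := fun x => eavg Q w / w x) (μ := volume.restrict Q)]
        with x hx
      rw [ENNReal.rpow_neg_one]
      have hx' : eavg Q w * (w x)⁻¹ ≤ ApConst 1 w := by
        rw [← div_eq_mul_inv]; exact hx.trans hess
      calc (w x)⁻¹ = (eavg Q w)⁻¹ * (eavg Q w * (w x)⁻¹) := by
            rw [← mul_assoc, ENNReal.inv_mul_cancel hA0.ne' hAt.ne, one_mul]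
        _ ≤ (eavg Q w)⁻¹ * ApConst 1 w := mul_le_mul_right hx' _
    have hle : (∫⁻ x in Q, w x ^ (-(1:ℝ))) ≤ ((eavg Q w)⁻¹ * ApConst 1 w) * volume Q := by
      calc (∫⁻ x in Q, w x ^ (-(1:ℝ))) ≤ ∫⁻ _ in Q, (eavg Q w)⁻¹ * ApConst 1 w :=
            lintegral_mono_ae hae
        _ = ((eavg Q w)⁻¹ * ApConst 1 w) * volume Q := by
            rw [lintegral_const, Measure.restrict_apply_univ]
    have heavg : (eavg Q fun x => w x ^ (-(1:ℝ))) ≤ (eavg Q w)⁻¹ * ApConst 1 w :=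
      ENNReal.div_le_of_le_mul hle
    calc eavg Q w * (eavg Q fun x => w x ^ (-(1:ℝ))) ^ (1/(1:ℝ))
        = eavg Q w * (eavg Q fun x => w x ^ (-(1:ℝ))) := by norm_num
      _ ≤ eavg Q w * ((eavg Q w)⁻¹ * ApConst 1 w) := mul_le_mul_right heavg _
      _ = (eavg Q w * (eavg Q w)⁻¹) * ApConst 1 w := by ring
      _ = ApConst 1 w := by rw [ENNReal.mul_inv_cancel hA0.ne' hAt.ne, one_mul]
  · -- 1 < p
    have hp1' : (0:ℝ) < p - 1 := by linarith
    refine ⟨(p-1)⁻¹, ApConst p w, by positivity, hAp, fun Q hQ => ?_⟩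
    have : eavg Q w * (eavg Q fun x => w x ^ (1 - p/(p-1))) ^ (p-1) ≤ ApConst p w := by
      rw [ApConst, if_neg (by intro h; rw [h] at hp1; exact lt_irrefl 1 hp1)]
      exact le_iSup₂ (f := fun (Q : Set (Fin n → ℝ)) (_ : IsCube Q) =>
        eavg Q w * (eavg Q fun x => w x ^ (1 - p/(p-1))) ^ (p-1)) Q hQ
    rw [show -((p-1)⁻¹) = 1 - p/(p-1) by field_simp; ring,
      show (1/(p-1)⁻¹ : ℝ) = p - 1 by rw [one_div, inv_inv]]
    exact this

/-- The per-cube reverse Hölder bound. -/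
lemma rh_bound {w : (Fin n → ℝ) → ℝ≥0∞} (hw : IsWeight w) {t : ℝ}
    (hrh : MemRH t w) {Q : Set (Fin n → ℝ)} (hQ : IsCube Q) :
    (eavg Q fun x => w x ^ t) ^ (1/t) ≤ RHConst t w * eavg Q w := by
  obtain ⟨hm, hpos, hint⟩ := hw
  have hA0 : 0 < eavg Q w := eavg_pos hQ hm (hpos.mono fun x h => h.1)
  have hAt : eavg Q w < ∞ := eavg_lt_top hQ (hint Q hQ)
  have hdiv : (eavg Q fun x => w x ^ t) ^ (1/t) / eavg Q w ≤ RHConst t w := by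
    rw [RHConst]
    exact le_iSup₂ (f := fun (Q : Set (Fin n → ℝ)) (_ : IsCube Q) =>
      (eavg Q fun x => w x ^ t) ^ (1/t) / eavg Q w) Q hQ
  exact (ENNReal.div_le_iff hA0.ne' hAt.ne).mp hdiv

lemma holder3 {X : Type*} [MeasurableSpace X] (ν : Measure X) [IsProbabilityMeasure ν]
    (w₁ w₂ : X → ℝ≥0∞) (hm₁ : AEMeasurable w₁ ν) (hm₂ : AEMeasurable w₂ ν)
    (h₁ : ∀ᵐ x ∂ν, 0 < w₁ x ∧ w₁ x < ∞) (h₂ : ∀ᵐ x ∂ν, 0 < w₂ x ∧ w₂ x < ∞)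
    {ε₁ ε₂ : ℝ} (hε₁ : 0 < ε₁) (hε₂ : 0 < ε₂)
    (hY : (∫⁻ x, w₁ x ^ (-ε₁) ∂ν) ≠ 0) (hZ : (∫⁻ x, w₂ x ^ (-ε₂) ∂ν) ≠ 0) :
    (∫⁻ x, w₁ x ^ (-ε₁) ∂ν) ^ (-(1/ε₁)) * (∫⁻ x, w₂ x ^ (-ε₂) ∂ν) ^ (-(1/ε₂))
      ≤ ∫⁻ x, w₁ x * w₂ x ∂ν := by
  set Y := ∫⁻ x, w₁ x ^ (-ε₁) ∂ν with hYdef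
  set Z := ∫⁻ x, w₂ x ^ (-ε₂) ∂ν with hZdef
  set Xi := ∫⁻ x, w₁ x * w₂ x ∂ν with hXdef
  by_cases hYt : Y = ∞
  · rw [hYt, ENNReal.top_rpow_of_neg (neg_lt_zero.mpr (by positivity)), zero_mul]
    exact zero_le
  by_cases hZt : Z = ∞
  · rw [hZt, ENNReal.top_rpow_of_neg (neg_lt_zero.mpr (by positivity)), mul_zero]
    exact zero_le
  -- exponents
  set θ : ℝ := (1 + ε₁⁻¹ + ε₂⁻¹)⁻¹ with hθdef
  have hD : (0:ℝ) < 1 + ε₁⁻¹ + ε₂⁻¹ := by positivity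
  have hθ : 0 < θ := by positivity
  have hθ1 : θ < 1 := by
    rw [hθdef, inv_lt_one_iff₀]
    right; nlinarith [inv_pos.mpr hε₁, inv_pos.mpr hε₂]
  set a : ℝ := θ * ε₁⁻¹ with hadef
  set b : ℝ := θ * ε₂⁻¹ with hbdef
  have ha : 0 < a := by positivity
  have hb : 0 < b := by positivity
  have habθ : θ + a + b = 1 := by
    rw [hadef, hbdef, hθdef]; field_simp
  have h1θ : 1 - θ = a + b := by linarith
  have h1θpos : 0 < 1 - θ := by linarith
  -- key : 1 ≤ Xi^θ * (Y^a * Z^b)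
  have key : (1:ℝ≥0∞) ≤ Xi ^ θ * (Y ^ a * Z ^ b) := by
    have e1 : (1:ℝ≥0∞) = ∫⁻ x, ((w₁ x * w₂ x) ^ θ) * (w₁ x ^ (-θ) * w₂ x ^ (-θ)) ∂ν := by
      rw [show (1:ℝ≥0∞) = ∫⁻ _, 1 ∂ν by simp]
      refine lintegral_congr_ae ?_
      filter_upwards [h₁, h₂] with x ⟨hx1, hx1'⟩ ⟨hx2, hx2'⟩
      rw [ENNReal.mul_rpow_of_ne_top hx1'.ne hx2'.ne, ENNReal.rpow_neg, ENNReal.rpow_neg]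
      have n1 : w₁ x ^ θ ≠ 0 := by
        simp [ENNReal.rpow_eq_zero_iff, hx1.ne', hx1'.ne, not_lt.mpr hθ.le]
      have n1' : w₁ x ^ θ ≠ ∞ := (ENNReal.rpow_lt_top_of_nonneg hθ.le hx1'.ne).ne
      have n2 : w₂ x ^ θ ≠ 0 := by
        simp [ENNReal.rpow_eq_zero_iff, hx2.ne', hx2'.ne, not_lt.mpr hθ.le]
      have n2' : w₂ x ^ θ ≠ ∞ := (ENNReal.rpow_lt_top_of_nonneg hθ.le hx2'.ne).ne
      rw [show w₁ x ^ θ * w₂ x ^ θ * ((w₁ x ^ θ)⁻¹ * (w₂ x ^ θ)⁻¹)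
          = (w₁ x ^ θ * (w₁ x ^ θ)⁻¹) * (w₂ x ^ θ * (w₂ x ^ θ)⁻¹) by ring,
        ENNReal.mul_inv_cancel n1 n1', ENNReal.mul_inv_cancel n2 n2', one_mul]
    have hconj : (θ⁻¹ : ℝ).HolderConjugate (1-θ)⁻¹ := by
      constructor
      · rw [inv_inv, inv_inv, inv_one]; ring
      · exact inv_pos.mpr hθ
      · exact inv_pos.mpr h1θpos
    have hmf : AEMeasurable (fun x => (w₁ x * w₂ x) ^ θ) ν :=
      (hm₁.mul hm₂).pow aemeasurable_const
    have hmg : AEMeasurable (fun x => w₁ x ^ (-θ) * w₂ x ^ (-θ)) ν :=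
      ((hm₁.pow aemeasurable_const).mul (hm₂.pow aemeasurable_const))
    have hold1 := ENNReal.lintegral_mul_le_Lp_mul_Lq ν hconj hmf hmg
    simp only [Pi.mul_apply] at hold1
    have ef : (∫⁻ x, ((w₁ x * w₂ x) ^ θ) ^ (θ⁻¹ : ℝ) ∂ν) = Xi := by
      rw [hXdef]; refine lintegral_congr fun x => ?_
      rw [← ENNReal.rpow_mul, mul_inv_cancel₀ hθ.ne', ENNReal.rpow_one]
    -- second Hölder on g part
    have hconj2 : ((1-θ)/a : ℝ).HolderConjugate ((1-θ)/b) := by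
      constructor
      · rw [inv_div, inv_div, ← add_div, h1θ, div_self (by positivity), inv_one]
      · exact div_pos h1θpos ha
      · exact div_pos h1θpos hb
    have hmg1 : AEMeasurable (fun x => w₁ x ^ (-θ * (1-θ)⁻¹)) ν :=
      hm₁.pow aemeasurable_const
    have hmg2 : AEMeasurable (fun x => w₂ x ^ (-θ * (1-θ)⁻¹)) ν :=
      hm₂.pow aemeasurable_const
    have hold2 := ENNReal.lintegral_mul_le_Lp_mul_Lq ν hconj2 hmg1 hmg2
    simp only [Pi.mul_apply] at hold2
    have eg : (∫⁻ x, (w₁ x ^ (-θ) * w₂ x ^ (-θ)) ^ ((1-θ)⁻¹ : ℝ) ∂ν)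
        = ∫⁻ x, w₁ x ^ (-θ * (1-θ)⁻¹) * w₂ x ^ (-θ * (1-θ)⁻¹) ∂ν := by
      refine lintegral_congr_ae ?_
      filter_upwards [h₁, h₂] with x ⟨hx1, _⟩ ⟨hx2, _⟩
      have m1 : w₁ x ^ (-θ) ≠ ∞ := by
        simp [ENNReal.rpow_eq_top_iff, hx1.ne', neg_lt_zero.mpr hθ, not_lt.mpr hθ.le]
      have m2 : w₂ x ^ (-θ) ≠ ∞ := by
        simp [ENNReal.rpow_eq_top_iff, hx2.ne', neg_lt_zero.mpr hθ, not_lt.mpr hθ.le]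
      rw [ENNReal.mul_rpow_of_ne_top m1 m2, ← ENNReal.rpow_mul, ← ENNReal.rpow_mul]
    have eg1 : (∫⁻ x, (w₁ x ^ (-θ * (1-θ)⁻¹)) ^ ((1-θ)/a : ℝ) ∂ν) = Y := by
      rw [hYdef]; refine lintegral_congr fun x => ?_
      rw [← ENNReal.rpow_mul]
      congr 1
      rw [hadef]; field_simp
    have eg2 : (∫⁻ x, (w₂ x ^ (-θ * (1-θ)⁻¹)) ^ ((1-θ)/b : ℝ) ∂ν) = Z := by
      rw [hZdef]; refine lintegral_congr fun x => ?_
      rw [← ENNReal.rpow_mul]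
      congr 1
      rw [hbdef]; field_simp
    rw [eg1, eg2] at hold2
    -- assemble
    calc (1:ℝ≥0∞) = ∫⁻ x, ((w₁ x * w₂ x) ^ θ) * (w₁ x ^ (-θ) * w₂ x ^ (-θ)) ∂ν := e1
      _ ≤ (∫⁻ x, ((w₁ x * w₂ x) ^ θ) ^ (θ⁻¹:ℝ) ∂ν) ^ (1/(θ⁻¹:ℝ)) *
          (∫⁻ x, (w₁ x ^ (-θ) * w₂ x ^ (-θ)) ^ ((1-θ)⁻¹:ℝ) ∂ν) ^ (1/((1-θ)⁻¹:ℝ)) := hold1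
      _ ≤ (Xi) ^ (1/(θ⁻¹:ℝ)) *
          ((Y ^ (1/((1-θ)/a:ℝ)) * Z ^ (1/((1-θ)/b:ℝ)))) ^ (1/((1-θ)⁻¹:ℝ)) := by
          rw [ef]
          gcongr
          rw [eg]
          exact hold2
      _ = Xi ^ θ * (Y ^ a * Z ^ b) := by
          rw [show (1/(θ⁻¹:ℝ)) = θ by rw [one_div, inv_inv],
            show (1/((1-θ)⁻¹:ℝ)) = 1-θ by rw [one_div, inv_inv],
            ENNReal.mul_rpow_of_nonneg _ _ h1θpos.le, ← ENNReal.rpow_mul, ← ENNReal.rpow_mul,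
            show 1/((1-θ)/a) * (1-θ) = a by rw [one_div_div, div_mul_cancel₀ _ h1θpos.ne'],
            show 1/((1-θ)/b) * (1-θ) = b by rw [one_div_div, div_mul_cancel₀ _ h1θpos.ne']]
  -- from key derive the claim
  have hYa0 : Y ^ a ≠ 0 := by simp [ENNReal.rpow_eq_zero_iff, hY, hYt, not_lt.mpr ha.le]
  have hYat : Y ^ a ≠ ∞ := (ENNReal.rpow_lt_top_of_nonneg ha.le hYt).ne
  have hZb0 : Z ^ b ≠ 0 := by simp [ENNReal.rpow_eq_zero_iff, hZ, hZt, not_lt.mpr hb.le]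
  have hZbt : Z ^ b ≠ ∞ := (ENNReal.rpow_lt_top_of_nonneg hb.le hZt).ne
  have step : Y ^ (-a) * Z ^ (-b) ≤ Xi ^ θ := by
    have h2 := mul_le_mul_right key ((Y ^ a * Z ^ b)⁻¹)
    rw [mul_one] at h2
    calc Y ^ (-a) * Z ^ (-b) = (Y ^ a * Z ^ b)⁻¹ := by
          rw [ENNReal.rpow_neg, ENNReal.rpow_neg, ENNReal.mul_inv (Or.inl hYa0) (Or.inl hYat)]
      _ ≤ (Y ^ a * Z ^ b)⁻¹ * (Xi ^ θ * (Y ^ a * Z ^ b)) := h2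
      _ = Xi ^ θ * ((Y ^ a * Z ^ b)⁻¹ * (Y ^ a * Z ^ b)) := by ring
      _ = Xi ^ θ := by
          rw [ENNReal.inv_mul_cancel (mul_ne_zero hYa0 hZb0)
            (ENNReal.mul_ne_top hYat hZbt), mul_one]
  have step2 := ENNReal.rpow_le_rpow step (le_of_lt (by positivity : (0:ℝ) < θ⁻¹))
  rw [← ENNReal.rpow_mul, mul_inv_cancel₀ hθ.ne', ENNReal.rpow_one,
    ENNReal.mul_rpow_of_nonneg _ _ (by positivity : (0:ℝ) ≤ θ⁻¹),
    ← ENNReal.rpow_mul, ← ENNReal.rpow_mul] at step2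
  have ea : -a * θ⁻¹ = -(1/ε₁) := by rw [hadef]; field_simp
  have eb : -b * θ⁻¹ = -(1/ε₂) := by rw [hbdef]; field_simp
  rw [ea, eb] at step2
  exact step2

/-- If `w₁, w₂ ∈ A_∞`, `w₁ ∈ RH_s` and `w₂ ∈ RH_{s'}` (`s' = s/(s-1)`),
then there is `C > 0` such that for every cube `Q`,
`(⨍_Q w₁^s)^{1/s} (⨍_Q w₂^{s'})^{1/s'} ≤ C ⨍_Q w₁ w₂`. -/
theorem statement7 (n : ℕ) (s : ℝ) (hs : 1 < s)
    (w₁ w₂ : (Fin n → ℝ) → ℝ≥0∞) (hw₁ : IsWeight w₁) (hw₂ : IsWeight w₂)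
    (hA₁ : ∃ p : ℝ, 1 ≤ p ∧ MemAp p w₁) (hA₂ : ∃ p : ℝ, 1 ≤ p ∧ MemAp p w₂)
    (hrh₁ : MemRH s w₁) (hrh₂ : MemRH (s / (s - 1)) w₂) :
    ∃ C : ℝ≥0∞, 0 < C ∧ C < ∞ ∧
      ∀ Q : Set (Fin n → ℝ), IsCube Q →
        (eavg Q fun x => w₁ x ^ s) ^ (1 / s) *
            (eavg Q fun x => w₂ x ^ (s / (s - 1))) ^ (1 / (s / (s - 1))) ≤
          C * eavg Q fun x => w₁ x * w₂ x := by
  obtain ⟨ε₁, B₁, hε₁, hB₁, hap₁⟩ := ap_bound hw₁ hA₁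
  obtain ⟨ε₂, B₂, hε₂, hB₂, hap₂⟩ := ap_bound hw₂ hA₂
  set R₁ := RHConst s w₁ with hR₁
  set R₂ := RHConst (s/(s-1)) w₂ with hR₂
  have hR₁t : R₁ < ∞ := hrh₁
  have hR₂t : R₂ < ∞ := hrh₂
  refine ⟨(R₁+1)*(B₁+1)*((R₂+1)*(B₂+1)), ?_, ?_, ?_⟩
  · exact ENNReal.mul_pos (mul_ne_zero (by simp) (by simp)) (mul_ne_zero (by simp) (by simp))
  · refine ENNReal.mul_lt_top (ENNReal.mul_lt_top ?_ ?_) (ENNReal.mul_lt_top ?_ ?_) <;>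
      exact ENNReal.add_lt_top.mpr ⟨by assumption, one_lt_top⟩
  intro Q hQ
  obtain ⟨hQm, hv0, hvt⟩ := hQ.aux
  set ν := (volume Q)⁻¹ • volume.restrict Q with hν
  haveI : IsProbabilityMeasure ν := ⟨by
    rw [hν, Measure.smul_apply, Measure.restrict_apply_univ, smul_eq_mul,
      ENNReal.inv_mul_cancel hv0.ne' hvt.ne]⟩
  have heavg : ∀ f : (Fin n → ℝ) → ℝ≥0∞, eavg Q f = ∫⁻ x, f x ∂ν := fun f => by
    rw [eavg, hν, lintegral_smul_measure, ENNReal.div_eq_inv_mul, smul_eq_mul]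
  obtain ⟨hm₁, hpos₁, hint₁⟩ := hw₁
  obtain ⟨hm₂, hpos₂, hint₂⟩ := hw₂
  have hν₁ : ∀ᵐ x ∂ν, 0 < w₁ x ∧ w₁ x < ∞ := Measure.ae_smul_measure (ae_restrict_of_ae hpos₁) _
  have hν₂ : ∀ᵐ x ∂ν, 0 < w₂ x ∧ w₂ x < ∞ := Measure.ae_smul_measure (ae_restrict_of_ae hpos₂) _
  have hE₁0 : 0 < eavg Q w₁ := eavg_pos hQ hm₁ (hpos₁.mono fun x h => h.1)
  have hE₁t : eavg Q w₁ < ∞ := eavg_lt_top hQ (hint₁ Q hQ)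
  have hE₂0 : 0 < eavg Q w₂ := eavg_pos hQ hm₂ (hpos₂.mono fun x h => h.1)
  have hE₂t : eavg Q w₂ < ∞ := eavg_lt_top hQ (hint₂ Q hQ)
  have hposneg₁ : ∀ᵐ x ∂(volume : Measure (Fin n → ℝ)), 0 < w₁ x ^ (-ε₁) := by
    filter_upwards [hpos₁] with x hx
    rw [pos_iff_ne_zero]
    simp [ENNReal.rpow_eq_zero_iff, hx.1.ne', hx.2.ne, not_lt.mpr hε₁.le]
  have hposneg₂ : ∀ᵐ x ∂(volume : Measure (Fin n → ℝ)), 0 < w₂ x ^ (-ε₂) := by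
    filter_upwards [hpos₂] with x hx
    rw [pos_iff_ne_zero]
    simp [ENNReal.rpow_eq_zero_iff, hx.1.ne', hx.2.ne, not_lt.mpr hε₂.le]
  set Y := eavg Q (fun x => w₁ x ^ (-ε₁)) with hYdef
  set Z := eavg Q (fun x => w₂ x ^ (-ε₂)) with hZdef
  have hY0 : Y ≠ 0 := (eavg_pos hQ (hm₁.pow measurable_const) hposneg₁).ne'
  have hZ0 : Z ≠ 0 := (eavg_pos hQ (hm₂.pow measurable_const) hposneg₂).ne'
  have hb₁ := hap₁ Q hQ
  have hb₂ := hap₂ Q hQ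
  rw [← hYdef] at hb₁
  rw [← hZdef] at hb₂
  have hYe0 : Y ^ (1/ε₁) ≠ 0 := by
    rw [Ne, ENNReal.rpow_eq_zero_iff]; push_neg
    exact ⟨fun h => absurd h hY0, fun _ => by positivity⟩
  have hZe0 : Z ^ (1/ε₂) ≠ 0 := by
    rw [Ne, ENNReal.rpow_eq_zero_iff]; push_neg
    exact ⟨fun h => absurd h hZ0, fun _ => by positivity⟩
  have hYet : Y ^ (1/ε₁) ≠ ∞ := by
    intro h
    rw [h, ENNReal.mul_top hE₁0.ne'] at hb₁
    exact hB₁.ne (top_le_iff.mp hb₁)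
  have hZet : Z ^ (1/ε₂) ≠ ∞ := by
    intro h
    rw [h, ENNReal.mul_top hE₂0.ne'] at hb₂
    exact hB₂.ne (top_le_iff.mp hb₂)
  have hYt : Y ≠ ∞ := fun h => hYet (by rw [h, ENNReal.top_rpow_of_pos (by positivity)])
  have hZt : Z ≠ ∞ := fun h => hZet (by rw [h, ENNReal.top_rpow_of_pos (by positivity)])
  have hw₁le : eavg Q w₁ ≤ B₁ * Y ^ (-(1/ε₁)) := by
    rw [ENNReal.rpow_neg]
    calc eavg Q w₁ = (eavg Q w₁ * Y ^ (1/ε₁)) * (Y ^ (1/ε₁))⁻¹ := by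
          rw [mul_assoc, ENNReal.mul_inv_cancel hYe0 hYet, mul_one]
      _ ≤ B₁ * (Y ^ (1/ε₁))⁻¹ := mul_le_mul_left hb₁ _
  have hw₂le : eavg Q w₂ ≤ B₂ * Z ^ (-(1/ε₂)) := by
    rw [ENNReal.rpow_neg]
    calc eavg Q w₂ = (eavg Q w₂ * Z ^ (1/ε₂)) * (Z ^ (1/ε₂))⁻¹ := by
          rw [mul_assoc, ENNReal.mul_inv_cancel hZe0 hZet, mul_one]
      _ ≤ B₂ * (Z ^ (1/ε₂))⁻¹ := mul_le_mul_left hb₂ _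
  have hhold : Y ^ (-(1/ε₁)) * Z ^ (-(1/ε₂)) ≤ eavg Q fun x => w₁ x * w₂ x := by
    rw [hYdef, hZdef, heavg, heavg, heavg]
    exact holder3 ν w₁ w₂ hm₁.aemeasurable hm₂.aemeasurable hν₁ hν₂ hε₁ hε₂
      (by rw [← heavg]; exact hY0) (by rw [← heavg]; exact hZ0)
  calc (eavg Q fun x => w₁ x ^ s) ^ (1 / s) *
          (eavg Q fun x => w₂ x ^ (s / (s - 1))) ^ (1 / (s / (s - 1)))
      ≤ (R₁ * eavg Q w₁) * (R₂ * eavg Q w₂) := by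
        exact mul_le_mul' (rh_bound ⟨hm₁, hpos₁, hint₁⟩ hrh₁ hQ)
          (rh_bound ⟨hm₂, hpos₂, hint₂⟩ hrh₂ hQ)
    _ ≤ (R₁ * (B₁ * Y ^ (-(1/ε₁)))) * (R₂ * (B₂ * Z ^ (-(1/ε₂)))) :=
        mul_le_mul' (mul_le_mul_right hw₁le _) (mul_le_mul_right hw₂le _)
    _ = (R₁ * B₁ * (R₂ * B₂)) * (Y ^ (-(1/ε₁)) * Z ^ (-(1/ε₂))) := by ring
    _ ≤ (R₁ * B₁ * (R₂ * B₂)) * eavg Q (fun x => w₁ x * w₂ x) :=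
        mul_le_mul_right hhold _
    _ ≤ ((R₁+1)*(B₁+1)*((R₂+1)*(B₂+1))) * eavg Q (fun x => w₁ x * w₂ x) := by
        gcongr <;> exact le_self_add
end
end

section
/- Let s > 1 and let w be a weight. Then w ∈ A_1 ∩ RH_s if and only if w^s ∈ A_1. -/
open MeasureTheory ENNReal
open scoped Classical

noncomputable section

variable {n : ℕ}

private lemma cube_volume {Q : Set (Fin n → ℝ)} (hQ : IsCube Q) :
    0 < volume Q ∧ volume Q ≠ ∞ := by
  obtain ⟨a, l, hl, rfl⟩ := hQ
  have hset : {x : Fin n → ℝ | ∀ i, a i ≤ x i ∧ x i < a i + l}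
      = Set.pi Set.univ fun i => Set.Ico (a i) (a i + l) := by
    ext x; simp [Set.mem_pi]
  rw [hset, volume_pi_pi]
  simp only [Real.volume_Ico, add_sub_cancel_left, Finset.prod_const, Finset.card_univ,
    Fintype.card_fin]
  refine ⟨ENNReal.pow_pos (ENNReal.ofReal_pos.mpr hl) n, ?_⟩
  exact (ENNReal.pow_lt_top ENNReal.ofReal_lt_top).ne

private lemma lint_pos {Q : Set (Fin n → ℝ)} (hQvol : 0 < volume Q)
    {f : (Fin n → ℝ) → ℝ≥0∞} (hfm : Measurable f)
    (hf : ∀ᵐ x ∂(volume : Measure (Fin n → ℝ)), f x ≠ 0) :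
    0 < ∫⁻ x in Q, f x := by
  rw [lintegral_pos_iff_support hfm]
  have h0 : volume.restrict Q (Function.support f)ᶜ = 0 := by
    have hA : (volume : Measure (Fin n → ℝ)) (Function.support f)ᶜ = 0 := by
      rw [MeasureTheory.ae_iff] at hf
      simpa [Function.support, Set.compl_setOf, Classical.not_not] using hf
    exact le_antisymm (hA ▸ Measure.le_iff'.1 Measure.restrict_le_self _) zero_le
  have h1 : volume Q ≤ volume.restrict Q (Function.support f) := by
    calc volume Q = volume.restrict Q Set.univ := (Measure.restrict_apply_univ _).symm
    _ = volume.restrict Q (Function.support f ∪ (Function.support f)ᶜ) := by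
        rw [Set.union_compl_self]
    _ ≤ volume.restrict Q (Function.support f) + volume.restrict Q (Function.support f)ᶜ :=
        measure_union_le _ _
    _ = volume.restrict Q (Function.support f) := by rw [h0, add_zero]
  exact lt_of_lt_of_le hQvol h1

private lemma eavg_jensen {s : ℝ} (hs : 1 < s) {Q : Set (Fin n → ℝ)} (hQ : IsCube Q)
    {w : (Fin n → ℝ) → ℝ≥0∞} (hwm : Measurable w) :
    eavg Q w ≤ (eavg Q fun x => w x ^ s) ^ (1 / s) := by
  obtain ⟨hV0, hVtop⟩ := cube_volume hQ
  have hs0 : s ≠ 0 := by linarith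
  have hpq : s.HolderConjugate (s / (s - 1)) := Real.HolderConjugate.conjExponent hs
  have hH := ENNReal.lintegral_mul_le_Lp_mul_Lq (volume.restrict Q) hpq
    hwm.aemeasurable (aemeasurable_const (b := (1 : ℝ≥0∞)))
  simp only [Pi.mul_apply, mul_one, ENNReal.one_rpow, lintegral_const,
    Measure.restrict_apply_univ, one_mul] at hH
  have hq : 1 / (s / (s - 1)) = 1 - 1/s := by
    rw [one_div_div, sub_div, div_self hs0]
  rw [hq] at hH
  have hexp : (1 - 1/s) - 1 = -(1/s) := by ring
  calc eavg Q w = (∫⁻ x in Q, w x) / volume Q := rfl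
  _ ≤ ((∫⁻ x in Q, w x ^ s) ^ (1/s) * volume Q ^ (1 - 1/s)) / volume Q :=
      ENNReal.div_le_div_right hH _
  _ = (∫⁻ x in Q, w x ^ s) ^ (1/s) * (volume Q ^ (1 - 1/s) / volume Q ^ (1:ℝ)) := by
      rw [mul_div_assoc, ENNReal.rpow_one]
  _ = (∫⁻ x in Q, w x ^ s) ^ (1/s) * (volume Q ^ (1/s))⁻¹ := by
      rw [← ENNReal.rpow_sub _ _ hV0.ne' hVtop, hexp, ENNReal.rpow_neg]
  _ = ((∫⁻ x in Q, w x ^ s) / volume Q) ^ (1/s) := by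
      rw [ENNReal.div_rpow_of_nonneg _ _ (by positivity)]
      exact (div_eq_mul_inv _ _).symm
  _ = _ := rfl


/-- For `s > 1` and a weight `w`, `w ∈ A_1 ∩ RH_s` iff `w^s ∈ A_1`. -/
theorem statement12 (n : ℕ) (s : ℝ) (hs : 1 < s)
    (w : (Fin n → ℝ) → ℝ≥0∞) (hw : IsWeight w) :
    (MemAp 1 w ∧ MemRH s w) ↔ MemAp 1 (fun x => w x ^ s) := by
  obtain ⟨hwm, hae, hfin⟩ := hw
  have hs0 : (0:ℝ) < s := by linarith
  have hs0' : s ≠ 0 := hs0.ne'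
  have hinv : (0:ℝ) < 1/s := by positivity
  have hB : ∀ Q : Set (Fin n → ℝ), IsCube Q → 0 < eavg Q w ∧ eavg Q w ≠ ∞ := by
    intro Q hQ
    obtain ⟨hV0, hVt⟩ := cube_volume hQ
    constructor
    · exact ENNReal.div_pos (lint_pos hV0 hwm (hae.mono fun x h => h.1.ne')).ne' hVt
    · exact (ENNReal.div_lt_top (hfin Q hQ).ne hV0.ne').ne
  have h11 : (1:ℝ) = 1 := rfl
  simp only [MemAp, MemRH, ApConst, RHConst, if_pos h11]
  constructor
  · rintro ⟨h1, h2⟩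
    set C1 := ⨆ (Q : Set (Fin n → ℝ)) (_ : IsCube Q),
      essSup (fun x => eavg Q w / w x) (volume.restrict Q) with hC1def
    set C2 := ⨆ (Q : Set (Fin n → ℝ)) (_ : IsCube Q),
      (eavg Q fun x => w x ^ s) ^ (1 / s) / eavg Q w with hC2def
    refine lt_of_le_of_lt (iSup₂_le fun Q hQ => ?_)
      (ENNReal.rpow_lt_top_of_nonneg hs0.le (ENNReal.mul_ne_top h1.ne h2.ne))
    obtain ⟨hB0, hBt⟩ := hB Q hQ
    have hA1 : essSup (fun x => eavg Q w / w x) (volume.restrict Q) ≤ C1 := by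
      rw [hC1def]
      exact le_iSup₂ (f := fun (Q : Set (Fin n → ℝ)) (_ : IsCube Q) =>
        essSup (fun x => eavg Q w / w x) (volume.restrict Q)) Q hQ
    have hRH : (eavg Q fun x => w x ^ s) ^ (1/s) / eavg Q w ≤ C2 := by
      rw [hC2def]
      exact le_iSup₂ (f := fun (Q : Set (Fin n → ℝ)) (_ : IsCube Q) =>
        (eavg Q fun x => w x ^ s) ^ (1 / s) / eavg Q w) Q hQ
    have hRH' : (eavg Q fun x => w x ^ s) ≤ (C2 * eavg Q w) ^ s := by
      have hd := (ENNReal.div_le_iff hB0.ne' hBt).mp hRH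
      calc (eavg Q fun x => w x ^ s) = ((eavg Q fun x => w x ^ s) ^ (1/s)) ^ s := by
            rw [← ENNReal.rpow_mul, one_div, inv_mul_cancel₀ hs0', ENNReal.rpow_one]
      _ ≤ (C2 * eavg Q w) ^ s := ENNReal.rpow_le_rpow hd hs0.le
    refine essSup_le_of_ae_le _ ?_
    have haeQ : ∀ᵐ x ∂(volume.restrict Q), 0 < w x ∧ w x < ∞ := ae_restrict_of_ae hae
    have haeC : ∀ᵐ x ∂(volume.restrict Q), eavg Q w / w x ≤ C1 :=
      (ENNReal.ae_le_essSup _).mono fun x hx => hx.trans hA1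
    filter_upwards [haeQ, haeC] with x hx hx2
    have hwx0 : w x ≠ 0 := hx.1.ne'
    have hwxt : w x ≠ ∞ := hx.2.ne
    have hBle : eavg Q w ≤ C1 * w x := (ENNReal.div_le_iff hwx0 hwxt).mp hx2
    have hmain : (eavg Q fun y => w y ^ s) ≤ (C2 * (C1 * w x)) ^ s :=
      hRH'.trans (ENNReal.rpow_le_rpow (mul_le_mul_right hBle _) hs0.le)
    rw [ENNReal.div_le_iff (by simp [ENNReal.rpow_eq_zero_iff_of_pos hs0, hwx0])
      (ENNReal.rpow_ne_top_of_nonneg hs0.le hwxt)]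
    calc (eavg Q fun y => w y ^ s) ≤ (C2 * (C1 * w x)) ^ s := hmain
    _ = (C1 * C2) ^ s * w x ^ s := by
        rw [show C2 * (C1 * w x) = (C1 * C2) * w x by ring,
          ENNReal.mul_rpow_of_nonneg _ _ hs0.le]
  · intro h
    set C := ⨆ (Q : Set (Fin n → ℝ)) (_ : IsCube Q),
      essSup (fun x => eavg Q (fun y => w y ^ s) / w x ^ s) (volume.restrict Q) with hCdef
    have key : ∀ Q : Set (Fin n → ℝ), IsCube Q →
        essSup (fun x => eavg Q w / w x) (volume.restrict Q) ≤ C ^ (1/s) ∧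
        (eavg Q fun x => w x ^ s) ^ (1/s) / eavg Q w ≤ C ^ (1/s) := by
      intro Q hQ
      obtain ⟨hV0, hVt⟩ := cube_volume hQ
      obtain ⟨hB0, hBt⟩ := hB Q hQ
      have hwsm : Measurable fun x : Fin n → ℝ => w x ^ s := hwm.pow_const s
      set A := eavg Q (fun x => w x ^ s) with hAdef
      have hA0 : 0 < A := ENNReal.div_pos (lint_pos hV0 hwsm (hae.mono fun x hx => by
        simp [ENNReal.rpow_eq_zero_iff_of_pos hs0, hx.1.ne'])).ne' hVt
      have hCle : essSup (fun x => A / w x ^ s) (volume.restrict Q) ≤ C := by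
        rw [hCdef, hAdef]
        exact le_iSup₂ (f := fun (Q : Set (Fin n → ℝ)) (_ : IsCube Q) =>
          essSup (fun x => eavg Q (fun y => w y ^ s) / w x ^ s) (volume.restrict Q)) Q hQ
      have haeQ : ∀ᵐ x ∂(volume.restrict Q), 0 < w x ∧ w x < ∞ := ae_restrict_of_ae hae
      have haeC : ∀ᵐ x ∂(volume.restrict Q), A / w x ^ s ≤ C :=
        (ENNReal.ae_le_essSup _).mono fun x hx => hx.trans hCle
      have hkey : ∀ᵐ x ∂(volume.restrict Q), A ≤ C * w x ^ s ∧ 0 < w x ∧ w x < ∞ := by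
        filter_upwards [haeQ, haeC] with x hx hx2
        refine ⟨(ENNReal.div_le_iff ?_ ?_).mp hx2, hx⟩
        · simp [ENNReal.rpow_eq_zero_iff_of_pos hs0, hx.1.ne']
        · exact ENNReal.rpow_ne_top_of_nonneg hs0.le hx.2.ne
      haveI : (MeasureTheory.ae (volume.restrict Q)).NeBot := ae_neBot.mpr (by
        intro h0
        rw [← Measure.restrict_apply_univ, h0] at hV0
        simp at hV0)
      obtain ⟨x₀, hx₀⟩ := hkey.exists
      have hC0 : C ≠ 0 := by
        intro hC
        rw [hC, zero_mul] at hx₀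
        exact hA0.ne' (le_antisymm hx₀.1 zero_le)
      have hwlow : ∀ᵐ x ∂(volume.restrict Q), A ^ (1/s) ≤ C ^ (1/s) * w x := by
        refine hkey.mono fun x hx => ?_
        calc A ^ (1/s) ≤ (C * w x ^ s) ^ (1/s) := ENNReal.rpow_le_rpow hx.1 hinv.le
        _ = C ^ (1/s) * w x := by
            rw [ENNReal.mul_rpow_of_nonneg _ _ hinv.le, ← ENNReal.rpow_mul,
              mul_one_div, div_self hs0', ENNReal.rpow_one]
      have hint : A ^ (1/s) * volume Q ≤ C ^ (1/s) * ∫⁻ x in Q, w x := by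
        calc A ^ (1/s) * volume Q = ∫⁻ _ in Q, A ^ (1/s) := (setLIntegral_const _ _).symm
        _ ≤ ∫⁻ x in Q, C ^ (1/s) * w x := lintegral_mono_ae hwlow
        _ = C ^ (1/s) * ∫⁻ x in Q, w x := lintegral_const_mul _ hwm
      have hRHb : A ^ (1/s) ≤ C ^ (1/s) * eavg Q w := by
        have hd := ENNReal.div_le_div_right hint (volume Q)
        rwa [mul_div_assoc, ENNReal.div_self hV0.ne' hVt, mul_one, mul_div_assoc] at hd
      constructor
      · refine essSup_le_of_ae_le _ ?_
        filter_upwards [hwlow, haeQ] with x hx1 hx2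
        rw [ENNReal.div_le_iff hx2.1.ne' hx2.2.ne]
        calc eavg Q w ≤ A ^ (1/s) := eavg_jensen hs hQ hwm
        _ ≤ C ^ (1/s) * w x := hx1
      · rw [ENNReal.div_le_iff hB0.ne' hBt]
        exact hRHb
    exact ⟨lt_of_le_of_lt (iSup₂_le fun Q hQ => (key Q hQ).1)
        (ENNReal.rpow_lt_top_of_nonneg hinv.le h.ne),
      lt_of_le_of_lt (iSup₂_le fun Q hQ => (key Q hQ).2)
        (ENNReal.rpow_lt_top_of_nonneg hinv.le h.ne)⟩
end
end

section
/- If w ∈ RH_∞ and w ∈ A_∞, then for every r > 0 the weight w^r belongs to RH_∞. -/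
open MeasureTheory ENNReal
open scoped Classical

noncomputable section

variable {n : ℕ}

lemma cube_vol' {n : ℕ} {Q : Set (Fin n → ℝ)} (hQ : IsCube Q) :
    volume Q ≠ 0 ∧ volume Q ≠ ∞ := by
  obtain ⟨a, l, hl, rfl⟩ := hQ
  have h : {x : Fin n → ℝ | ∀ i, a i ≤ x i ∧ x i < a i + l} =
      Set.pi Set.univ (fun i => Set.Ico (a i) (a i + l)) := by
    ext x; simp [Set.mem_pi]
  rw [h, volume_pi_pi]
  simp only [Real.volume_Ico, add_sub_cancel_left, Finset.prod_const, Finset.card_univ,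
    Fintype.card_fin]
  exact ⟨pow_ne_zero _ (by simp [ENNReal.ofReal_eq_zero]; linarith),
    ENNReal.pow_ne_top ENNReal.ofReal_ne_top⟩

/-- If `w ∈ RH_∞` and `w ∈ A_∞`, then for every `r > 0`, `w^r ∈ RH_∞`. -/
theorem statement14 (n : ℕ) (w : (Fin n → ℝ) → ℝ≥0∞) (hw : IsWeight w)
    (hrh : MemRHInf w) (hA : ∃ p : ℝ, 1 ≤ p ∧ MemAp p w) (r : ℝ) (hr : 0 < r) :
    MemRHInf fun x => w x ^ r := by
  obtain ⟨hwm, hwae, hwint⟩ := hw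
  set C : ℝ≥0∞ := RHInfConst w ⊔ 1 with hCdef
  have hC1 : 1 ≤ C := le_sup_right
  have hC0 : C ≠ 0 := by intro h; simp [h] at hC1
  have hCtop : C ≠ ∞ := (sup_lt_iff.mpr ⟨hrh, by norm_num⟩).ne
  set K : ℝ≥0∞ := C ^ r * C with hKdef
  have hKtop : K ≠ ∞ :=
    ENNReal.mul_ne_top (ENNReal.rpow_ne_top_of_nonneg hr.le hCtop) hCtop
  have hK0 : K ≠ 0 := by
    refine mul_ne_zero ?_ hC0
    simp [ENNReal.rpow_eq_zero_iff, hC0, hCtop, hr, hr.not_gt]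
  show RHInfConst _ < ∞
  rw [RHInfConst]
  refine lt_of_le_of_lt (iSup_le fun Q => iSup_le fun hQ => ?_) hKtop.lt_top
  obtain ⟨hV0, hVtop⟩ := cube_vol' hQ
  set V := volume Q with hVdef
  set I := ∫⁻ x in Q, w x with hIdef
  set A := eavg Q w with hAdef
  have hI0 : I ≠ 0 := by
    rw [hIdef]
    rw [← pos_iff_ne_zero, lintegral_pos_iff_support hwm]
    have hae : ∀ᵐ x ∂(volume.restrict Q), 0 < w x :=
      ae_restrict_of_ae (hwae.mono fun x hx => hx.1)
    have hnull : (volume.restrict Q) (Function.support w)ᶜ = 0 := by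
      refine measure_mono_null (fun x hx => ?_) (ae_iff.mp hae)
      simp only [Set.mem_compl_iff, Function.mem_support, not_not] at hx
      simp [hx]
    rw [pos_iff_ne_zero]
    intro h
    have := measure_univ_le_add_compl (μ := volume.restrict Q) (Function.support w)
    rw [h, hnull, add_zero, Measure.restrict_apply_univ] at this
    exact hV0 (le_antisymm this zero_le)
  have hAtop : A ≠ ∞ := by
    rw [hAdef]; exact (ENNReal.div_lt_top (hwint Q hQ).ne hV0).ne
  have hA0 : A ≠ 0 := by
    rw [hAdef]
    exact (ENNReal.div_pos hI0 hVtop).ne'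
  have hess : essSup (fun x => w x / eavg Q w) (volume.restrict Q) ≤ C := by
    refine le_trans ?_ (le_sup_left : RHInfConst w ≤ C)
    rw [RHInfConst]
    exact le_iSup_of_le Q (le_iSup_of_le hQ le_rfl)
  have hmain : ∀ᵐ x ∂(volume.restrict Q), w x ≤ C * A := by
    filter_upwards [_root_.ae_le_essSup (f := fun x => w x / eavg Q w) (μ := volume.restrict Q)]
      with x hx
    have h := le_trans hx hess
    rwa [← hAdef, ENNReal.div_le_iff hA0 hAtop] at h
  set J := ∫⁻ x in Q, w x ^ r with hJdef
  set B := eavg Q (fun x => w x ^ r) with hBdef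
  have hBval : B = J / V := rfl
  have hCAne : C * A ≠ 0 := mul_ne_zero hC0 hA0
  have hCAtop : C * A ≠ ∞ := ENNReal.mul_ne_top hCtop hAtop
  have hAB : A ^ r ≤ C * B := by
    rcases le_or_gt r 1 with hr1 | hr1
    · -- small exponent case
      have hstep : ∀ᵐ x ∂(volume.restrict Q), (C * A) ^ (r - 1) * w x ≤ w x ^ r := by
        filter_upwards [hmain, ae_restrict_of_ae hwae] with x hx hx'
        obtain ⟨hx0, hxt⟩ := hx'
        have hw1 : w x ^ r = w x ^ (r - 1) * w x := by
          calc w x ^ r = w x ^ ((r - 1) + 1) := by ring_nf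
            _ = w x ^ (r - 1) * w x ^ (1 : ℝ) := ENNReal.rpow_add _ _ hx0.ne' hxt.ne
            _ = w x ^ (r - 1) * w x := by rw [ENNReal.rpow_one]
        rw [hw1]
        have hneg : (C * A) ^ (r - 1) ≤ w x ^ (r - 1) := by
          rw [show r - 1 = -(1 - r) by ring, ENNReal.rpow_neg, ENNReal.rpow_neg]
          exact ENNReal.inv_le_inv.mpr (ENNReal.rpow_le_rpow hx (by linarith))
        exact mul_le_mul_left hneg _
      have hfin : (C * A) ^ (r - 1) ≠ ∞ := by
        rw [show r - 1 = -(1 - r) by ring, ENNReal.rpow_neg]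
        refine ENNReal.inv_ne_top.mpr ?_
        simp [ENNReal.rpow_eq_zero_iff, hCAne, hCAtop]
      have hint : (C * A) ^ (r - 1) * I ≤ J := by
        calc (C * A) ^ (r - 1) * I = ∫⁻ x in Q, (C * A) ^ (r - 1) * w x :=
              (lintegral_const_mul' _ _ hfin).symm
          _ ≤ J := lintegral_mono_ae hstep
      have hBge : (C * A) ^ (r - 1) * A ≤ B := by
        rw [hBval, hAdef]
        show (C * A) ^ (r - 1) * (I / V) ≤ J / V
        rw [div_eq_mul_inv, div_eq_mul_inv, ← mul_assoc]
        exact mul_le_mul_left hint _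
      have key : C * ((C * A) ^ (r - 1) * A) = C ^ r * A ^ r := by
        rw [ENNReal.mul_rpow_of_ne_top hCtop hAtop]
        calc C * (C ^ (r - 1) * A ^ (r - 1) * A)
            = (C ^ (1 : ℝ) * C ^ (r - 1)) * (A ^ (r - 1) * A ^ (1 : ℝ)) := by
              simp only [ENNReal.rpow_one]; ring
          _ = C ^ (1 + (r - 1)) * A ^ ((r - 1) + 1) := by
              rw [← ENNReal.rpow_add 1 (r - 1) hC0 hCtop,
                ← ENNReal.rpow_add (r - 1) 1 hA0 hAtop]
          _ = C ^ r * A ^ r := by norm_num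
      have h1C : (1 : ℝ≥0∞) ≤ C ^ r := by
        calc (1 : ℝ≥0∞) = 1 ^ r := (ENNReal.one_rpow r).symm
          _ ≤ C ^ r := ENNReal.rpow_le_rpow hC1 hr.le
      calc A ^ r = 1 * A ^ r := (one_mul _).symm
        _ ≤ C ^ r * A ^ r := mul_le_mul_left h1C _
        _ = C * ((C * A) ^ (r - 1) * A) := key.symm
        _ ≤ C * B := mul_le_mul_right hBge _
    · -- large exponent case, via Hoelder
      set q := r / (r - 1) with hqdef
      have hpq : r.HolderConjugate q := Real.HolderConjugate.conjExponent hr1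
      have hold := ENNReal.lintegral_mul_le_Lp_mul_Lq (volume.restrict Q) hpq
        hwm.aemeasurable (aemeasurable_const (b := (1 : ℝ≥0∞)))
      simp only [Pi.mul_apply, mul_one, one_mul, ENNReal.one_rpow, lintegral_const,
        Measure.restrict_apply_univ] at hold
      have hIJ : I ≤ J ^ (1 / r) * V ^ (1 / q) := hold
      have hq : (1 / q) * r = r - 1 := by
        rw [hqdef]; field_simp
      have hr0 : r ≠ 0 := hr.ne'
      have hVr0 : V ^ r ≠ 0 := by
        simp [ENNReal.rpow_eq_zero_iff, hV0, hVtop, hr.not_gt]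
      have hVrtop : V ^ r ≠ ∞ := ENNReal.rpow_ne_top_of_nonneg hr.le hVtop
      have step : A ^ r ≤ B := by
        calc A ^ r = (I / V) ^ r := by rw [hAdef]; rfl
          _ = I ^ r / V ^ r := ENNReal.div_rpow_of_nonneg _ _ hr.le
          _ ≤ (J ^ (1 / r) * V ^ (1 / q)) ^ r / V ^ r := by
              exact ENNReal.div_le_div_right (ENNReal.rpow_le_rpow hIJ hr.le) _
          _ = (J ^ ((1 / r) * r) * V ^ ((1 / q) * r)) / V ^ r := by
              rw [ENNReal.mul_rpow_of_nonneg _ _ hr.le, ← ENNReal.rpow_mul,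
                ← ENNReal.rpow_mul]
          _ = (J * V ^ (r - 1)) / V ^ r := by
              rw [one_div, inv_mul_cancel₀ hr0, ENNReal.rpow_one, hq]
          _ = J / V := by
              rw [ENNReal.rpow_sub r 1 hV0 hVtop, ENNReal.rpow_one,
                div_eq_mul_inv, div_eq_mul_inv, div_eq_mul_inv,
                show J * (V ^ r * V⁻¹) * (V ^ r)⁻¹ = J * V⁻¹ * (V ^ r * (V ^ r)⁻¹) by ring,
                ENNReal.mul_inv_cancel hVr0 hVrtop, mul_one]
          _ = B := hBval.symm
      calc A ^ r ≤ B := step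
        _ = 1 * B := (one_mul _).symm
        _ ≤ C * B := mul_le_mul_left hC1 _
  refine essSup_le_of_ae_le _ ?_
  filter_upwards [hmain] with x hx
  have h1 : w x ^ r ≤ (C * A) ^ r := ENNReal.rpow_le_rpow hx hr.le
  have h3 : w x ^ r ≤ K * B := by
    calc w x ^ r ≤ (C * A) ^ r := h1
      _ = C ^ r * A ^ r := ENNReal.mul_rpow_of_ne_top hCtop hAtop r
      _ ≤ C ^ r * (C * B) := mul_le_mul_right hAB _
      _ = K * B := by rw [hKdef]; ring
  show w x ^ r / eavg Q (fun x => w x ^ r) ≤ K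
  rw [← hBdef, ENNReal.div_le_iff_le_mul (Or.inr hKtop) (Or.inr hK0)]
  exact h3
end
end
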